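/- Let N be a positive integer and let ℤ[1/N] denote the localization of ℤ away from N (Localization.Away (N : ℤ)). Then the ring of formal Laurent series ℤ[1/N]((t)) (Laurent series with coefficients in ℤ[1/N], i.e. LaurentSeries over ℤ[1/N]) is an integral domain and a principal ideal ring (a principal ideal domain). -/

import Mathlib

open PowerSeries

/-- If `Q` is a prime ideal of `R⟦X⟧` not containing `X` whose ideal of constant
terms is principal, then `Q` is principal.  The generator is any `g ∈ Q` whose
constant term generates the image of `Q` under `constantCoeff`. -/
theorem powerSeries_prime_isPrincipal {R : Type*} [CommRing R]
    (Q : Ideal (PowerSeries R)) (hQ : Q.IsPrime) (hX : (X : PowerSeries R) ∉ Q)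
    (hpr : (Q.map (constantCoeff)).IsPrincipal) : Q.IsPrincipal := by
  obtain ⟨b, hb⟩ := hpr
  rw [Ideal.submodule_span_eq] at hb
  have hsurj : Function.Surjective (constantCoeff (R := R)) := fun r => ⟨C r, constantCoeff_C r⟩
  have hbmem : b ∈ Q.map (constantCoeff) := by
    rw [hb]; exact Ideal.mem_span_singleton_self b
  obtain ⟨g, hgQ, hgc⟩ := Ideal.mem_image_of_mem_map_of_surjective _ hsurj hbmem
  -- key step: peel off one coefficient
  have key : ∀ x ∈ Q, ∃ c : R, ∃ y ∈ Q, x = C c * g + X * y := by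
    intro x hx
    have h1 : constantCoeff x ∈ Ideal.span {b} := by
      rw [← hb]; exact Ideal.mem_map_of_mem _ hx
    obtain ⟨c, hc⟩ := Ideal.mem_span_singleton'.mp h1
    have h2 : (X : PowerSeries R) ∣ (x - C c * g) := by
      rw [X_dvd_iff, map_sub, map_mul, constantCoeff_C, hgc, hc, sub_self]
    obtain ⟨y, hy⟩ := h2
    have hyQ : y ∈ Q := by
      have hmem : X * y ∈ Q := by
        rw [← hy]; exact Q.sub_mem hx (Q.mul_mem_left _ hgQ)
      exact (hQ.mem_or_mem hmem).resolve_left hX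
    exact ⟨c, y, hyQ, by rw [← hy]; ring⟩
  choose! c y hyQ hrec using key
  -- show every element of Q lies in span {g}
  suffices hsub : ∀ f ∈ Q, f ∈ Ideal.span ({g} : Set (PowerSeries R)) by
    exact ⟨g, le_antisymm hsub
      ((Submodule.span_le).mpr (Set.singleton_subset_iff.mpr hgQ))⟩
  intro f hf
  -- the recursively defined sequence of "tails"
  let seq : ℕ → {z : PowerSeries R // z ∈ Q} := fun n =>
    Nat.rec ⟨f, hf⟩ (fun _ p => ⟨y p.1, hyQ p.1 p.2⟩) n
  let cs : ℕ → R := fun n => c (seq n).1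
  have hseq : ∀ n : ℕ, (seq n).1 = C (cs n) * g + X * (seq (n + 1)).1 := fun n =>
    hrec (seq n).1 (seq n).2
  have main : ∀ n : ℕ, f = g * (∑ i ∈ Finset.range n, C (cs i) * X ^ i)
      + X ^ n * (seq n).1 := by
    intro n
    induction n with
    | zero => simp [seq]
    | succ n ih =>
      rw [Finset.sum_range_succ, ih, hseq n]
      ring
  have hfq : f = g * PowerSeries.mk cs := by
    ext k
    have h1 := main (k + 1)
    have h2 : (X : PowerSeries R) ^ (k + 1) ∣
        (PowerSeries.mk cs - ∑ i ∈ Finset.range (k + 1), C (cs i) * X ^ i) := by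
      rw [X_pow_dvd_iff]
      intro m hm
      rw [map_sub, coeff_mk, map_sum]
      rw [Finset.sum_congr rfl (fun i _ => coeff_C_mul_X_pow (cs i) i m)]
      rw [Finset.sum_ite_eq (Finset.range (k + 1)) m cs, if_pos (Finset.mem_range.mpr hm),
        sub_self]
    obtain ⟨r, hr⟩ := h2
    have hmk : PowerSeries.mk cs =
        (∑ i ∈ Finset.range (k + 1), C (cs i) * X ^ i) + X ^ (k + 1) * r := by
      rw [← hr]; ring
    have hvan : ∀ z : PowerSeries R, (coeff k) (X ^ (k + 1) * z) = 0 := by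
      intro z
      exact X_pow_dvd_iff.mp (dvd_mul_right _ _) k (Nat.lt_succ_self k)
    calc (coeff k) f
        = (coeff k) (g * (∑ i ∈ Finset.range (k + 1), C (cs i) * X ^ i)
            + X ^ (k + 1) * (seq (k + 1)).1) := by rw [← h1]
      _ = (coeff k) (g * (∑ i ∈ Finset.range (k + 1), C (cs i) * X ^ i)) := by
            rw [map_add, hvan, add_zero]
      _ = (coeff k) (g * PowerSeries.mk cs) := by
            rw [hmk]
            rw [mul_add, map_add, ← mul_assoc]
            rw [show g * X ^ (k+1) * r = X ^ (k+1) * (g * r) by ring, hvan, add_zero]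
  rw [hfq]
  exact Ideal.mem_span_singleton.mpr (dvd_mul_right g _)

/-- For a positive integer `N`, the ring of formal Laurent series over
`ℤ[1/N]` is an integral domain and a principal ideal ring. -/
theorem laurentSeries_over_int_away_isPID (N : ℕ) (hN : 0 < N) :
    IsDomain (LaurentSeries (Localization.Away (N : ℤ))) ∧
    IsPrincipalIdealRing (LaurentSeries (Localization.Away (N : ℤ))) := by
  have hNz : (N : ℤ) ≠ 0 := by exact_mod_cast hN.ne'
  letI : IsDomain (Localization.Away (N : ℤ)) :=
    IsLocalization.isDomain_of_le_nonZeroDivisors _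
      (powers_le_nonZeroDivisors_of_noZeroDivisors hNz)
  set R := Localization.Away (N : ℤ) with hR
  -- every ideal of ℤ[1/N] is principal
  have hRpid : ∀ I : Ideal R, I.IsPrincipal := by
    intro I
    obtain ⟨a, ha⟩ := (IsPrincipalIdealRing.principal (I.comap (algebraMap ℤ R)))
    rw [Ideal.submodule_span_eq] at ha
    refine ⟨algebraMap ℤ R a, ?_⟩
    rw [← IsLocalization.map_comap (Submonoid.powers (N : ℤ)) R I, Ideal.under_def, ha,
      Ideal.map_span, Set.image_singleton]
  have hdom : IsDomain (LaurentSeries R) := inferInstance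
  refine ⟨hdom, ?_⟩
  have hmain : ∀ P : Ideal (LaurentSeries R), P.IsPrime → P.IsPrincipal := by
    intro P hP
    set Q := P.comap (algebraMap (PowerSeries R) (LaurentSeries R)) with hQdef
    have hQp : Q.IsPrime := hP.comap _
    have hX : (X : PowerSeries R) ∉ Q := by
      intro h
      have hu : IsUnit (algebraMap (PowerSeries R) (LaurentSeries R) X) :=
        IsLocalization.map_units (LaurentSeries R)
          (⟨X, Submonoid.mem_powers _⟩ : Submonoid.powers (X : PowerSeries R))
      exact hP.ne_top (P.eq_top_of_isUnit_mem h hu)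
    obtain ⟨g, hg⟩ := powerSeries_prime_isPrincipal Q hQp hX (hRpid _)
    rw [Ideal.submodule_span_eq] at hg
    refine ⟨HahnSeries.ofPowerSeries ℤ R g, ?_⟩
    rw [← IsLocalization.map_comap (Submonoid.powers (X : PowerSeries R)) (LaurentSeries R) P, Ideal.under_def,
      ← hQdef, hg, Ideal.map_span, Set.image_singleton]
    rfl
  exact IsPrincipalIdealRing.of_prime (R := LaurentSeries R) hmain
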